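/- Let f: ℕ → ℂ satisfy Σ_{n ≤ X} |f(n)|² ≪ X(log X)^{c-1} for some c ≥ 1 and all X ≥ 2. Then for any Y with 2 ≤ Y ≤ X, Σ_{n ≤ X} |f(n)|·log(1 + Y/n) ≪ X(log X)^{(c-1)/2}·(Y/X + (log X)·min(1, Y/X))^{1/2} — in particular, if Y = X(log X)^{-A}, then Σ_{n ≤ X} |f(n)|·log(1 + Y/n) ≪ X(log X)^{(c+1)/2 - A/2} + X(log X)^{(c-1)/2 - A}. -/

import Mathlib

open Finset

/-- `log(1+t) ≤ 2√t` for `t ≥ 0`. -/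
lemma log_one_add_le_two_sqrt {t : ℝ} (ht : 0 ≤ t) :
    Real.log (1 + t) ≤ 2 * Real.sqrt t := by
  have hs := Real.sqrt_nonneg t
  have hsq : Real.sqrt t ^ 2 = t := Real.sq_sqrt ht
  have h1 : (1 : ℝ) + t ≤ (1 + Real.sqrt t) ^ 2 := by nlinarith
  calc Real.log (1 + t) ≤ Real.log ((1 + Real.sqrt t) ^ 2) :=
        Real.log_le_log (by linarith) h1
    _ = 2 * Real.log (1 + Real.sqrt t) := by
        rw [Real.log_pow]; push_cast; ring
    _ ≤ 2 * Real.sqrt t := by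
        have := Real.log_le_sub_one_of_pos (x := 1 + Real.sqrt t) (by linarith)
        linarith

lemma harmonic_sum_le (N : ℕ) :
    ∑ n ∈ Finset.Icc 1 N, ((n : ℝ))⁻¹ ≤ 1 + Real.log N := by
  have h1 := harmonic_le_one_add_log N
  have h2 : ((harmonic N : ℚ) : ℝ) = ∑ n ∈ Finset.Icc 1 N, ((n : ℝ))⁻¹ := by
    rw [harmonic_eq_sum_Icc]; push_cast; rfl
  linarith [h2 ▸ h1]

/-- Core estimate via Cauchy–Schwarz. -/
lemma core_bound (f : ℕ → ℂ) (c : ℝ) (C₀ : ℝ)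
    (hmoment : ∀ X : ℝ, 2 ≤ X →
      ∑ n ∈ Finset.Icc 1 ⌊X⌋₊, ‖f n‖ ^ 2 ≤ C₀ * X * (Real.log X) ^ (c - 1))
    (X Y : ℝ) (hX : 2 ≤ X) (hY : 0 < Y) :
    ∑ n ∈ Finset.Icc 1 ⌊X⌋₊, ‖f n‖ * Real.log (1 + Y / n)
      ≤ 2 * Real.sqrt C₀ * Real.sqrt X * Real.sqrt Y
          * (Real.log X) ^ ((c - 1) / 2) * Real.sqrt (1 + Real.log X) := by
  have hX0 : (0 : ℝ) < X := by linarith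
  have hlogX : 0 < Real.log X := Real.log_pos (by linarith)
  -- nonnegativity of C₀
  have hC₀ : 0 ≤ C₀ := by
    have h := hmoment 2 le_rfl
    have hsum : (0 : ℝ) ≤ ∑ n ∈ Finset.Icc 1 ⌊(2 : ℝ)⌋₊, ‖f n‖ ^ 2 :=
      Finset.sum_nonneg fun i _ => sq_nonneg _
    have hpos : (0 : ℝ) < 2 * (Real.log 2) ^ (c - 1) := by
      positivity
    nlinarith [Real.rpow_pos_of_pos (two_pos (α := ℝ)) (c - 1),
      Real.log_pos (by norm_num : (1 : ℝ) < 2),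
      Real.rpow_pos_of_pos (Real.log_pos (by norm_num : (1 : ℝ) < 2)) (c - 1)]
  set S := ∑ n ∈ Finset.Icc 1 ⌊X⌋₊, ‖f n‖ * Real.log (1 + Y / n) with hS
  -- each weight is nonneg
  have hwt : ∀ n ∈ Finset.Icc 1 ⌊X⌋₊, 0 ≤ Real.log (1 + Y / (n : ℝ)) := by
    intro n hn
    rw [Finset.mem_Icc] at hn
    have hn1 : (1 : ℝ) ≤ (n : ℝ) := by exact_mod_cast hn.1
    have : 0 ≤ Y / (n : ℝ) := div_nonneg hY.le (by linarith)
    exact Real.log_nonneg (by linarith)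
  have hSnn : 0 ≤ S :=
    Finset.sum_nonneg fun n hn => mul_nonneg (norm_nonneg _) (hwt n hn)
  -- Cauchy–Schwarz
  have hCS : S ^ 2 ≤ (∑ n ∈ Finset.Icc 1 ⌊X⌋₊, ‖f n‖ ^ 2)
      * ∑ n ∈ Finset.Icc 1 ⌊X⌋₊, (Real.log (1 + Y / n)) ^ 2 :=
    Finset.sum_mul_sq_le_sq_mul_sq _ _ _
  -- log sum bound
  have hlogsum : ∑ n ∈ Finset.Icc 1 ⌊X⌋₊, (Real.log (1 + Y / n)) ^ 2
      ≤ 4 * Y * (1 + Real.log X) := by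
    have hpt : ∀ n ∈ Finset.Icc 1 ⌊X⌋₊,
        (Real.log (1 + Y / n)) ^ 2 ≤ 4 * Y * ((n : ℝ))⁻¹ := by
      intro n hn
      rw [Finset.mem_Icc] at hn
      have hn1 : (1 : ℝ) ≤ (n : ℝ) := by exact_mod_cast hn.1
      have htn : 0 ≤ Y / (n : ℝ) := div_nonneg hY.le (by linarith)
      have h1 := log_one_add_le_two_sqrt htn
      have h0 : 0 ≤ Real.log (1 + Y / (n : ℝ)) :=
        Real.log_nonneg (by linarith)
      have h2 : (Real.log (1 + Y / n)) ^ 2 ≤ (2 * Real.sqrt (Y / n)) ^ 2 := by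
        apply pow_le_pow_left₀ h0 h1
      calc (Real.log (1 + Y / n)) ^ 2 ≤ (2 * Real.sqrt (Y / n)) ^ 2 := h2
        _ = 4 * (Y / n) := by
            rw [mul_pow, Real.sq_sqrt htn]; norm_num
        _ = 4 * Y * ((n : ℝ))⁻¹ := by rw [div_eq_mul_inv]; ring
    calc ∑ n ∈ Finset.Icc 1 ⌊X⌋₊, (Real.log (1 + Y / n)) ^ 2
        ≤ ∑ n ∈ Finset.Icc 1 ⌊X⌋₊, 4 * Y * ((n : ℝ))⁻¹ :=
          Finset.sum_le_sum hpt
      _ = 4 * Y * ∑ n ∈ Finset.Icc 1 ⌊X⌋₊, ((n : ℝ))⁻¹ := by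
          rw [Finset.mul_sum]
      _ ≤ 4 * Y * (1 + Real.log ⌊X⌋₊) := by
          apply mul_le_mul_of_nonneg_left (harmonic_sum_le _) (by linarith)
      _ ≤ 4 * Y * (1 + Real.log X) := by
          have h1 : (⌊X⌋₊ : ℝ) ≤ X := Nat.floor_le hX0.le
          have h2 : Real.log ⌊X⌋₊ ≤ Real.log X := by
            rcases eq_or_ne (⌊X⌋₊ : ℝ) 0 with h | h
            · rw [h, Real.log_zero]; exact hlogX.le
            · exact Real.log_le_log (lt_of_le_of_ne (Nat.cast_nonneg _) (Ne.symm h)) h1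
          nlinarith
  have hmom := hmoment X hX
  have hmomnn : (0 : ℝ) ≤ ∑ n ∈ Finset.Icc 1 ⌊X⌋₊, ‖f n‖ ^ 2 :=
    Finset.sum_nonneg fun i _ => sq_nonneg _
  have hlsnn : (0 : ℝ) ≤ ∑ n ∈ Finset.Icc 1 ⌊X⌋₊, (Real.log (1 + Y / n)) ^ 2 :=
    Finset.sum_nonneg fun i _ => sq_nonneg _
  have hP : S ^ 2 ≤ (C₀ * X * (Real.log X) ^ (c - 1)) * (4 * Y * (1 + Real.log X)) := by
    calc S ^ 2 ≤ (∑ n ∈ Finset.Icc 1 ⌊X⌋₊, ‖f n‖ ^ 2)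
        * ∑ n ∈ Finset.Icc 1 ⌊X⌋₊, (Real.log (1 + Y / n)) ^ 2 := hCS
      _ ≤ (C₀ * X * (Real.log X) ^ (c - 1)) * (4 * Y * (1 + Real.log X)) := by
          apply mul_le_mul hmom hlogsum hlsnn
          positivity
  have hSle : S ≤ Real.sqrt ((C₀ * X * (Real.log X) ^ (c - 1)) * (4 * Y * (1 + Real.log X))) :=
    Real.le_sqrt_of_sq_le hP
  refine hSle.trans_eq ?_
  have h1L : (0 : ℝ) ≤ 1 + Real.log X := by linarith
  have hrp : Real.sqrt ((Real.log X) ^ (c - 1)) = (Real.log X) ^ ((c - 1) / 2) := by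
    rw [Real.sqrt_eq_rpow, ← Real.rpow_mul hlogX.le, mul_one_div]
  have h4 : Real.sqrt 4 = 2 := by
    rw [show (4 : ℝ) = 2 ^ 2 by norm_num, Real.sqrt_sq (by norm_num)]
  rw [show C₀ * X * (Real.log X) ^ (c - 1) * (4 * Y * (1 + Real.log X))
      = C₀ * (X * ((Real.log X) ^ (c - 1) * (4 * (Y * (1 + Real.log X))))) by ring]
  rw [Real.sqrt_mul hC₀, Real.sqrt_mul hX0.le, Real.sqrt_mul (by positivity),
    Real.sqrt_mul (by norm_num : (0:ℝ) ≤ 4), Real.sqrt_mul hY.le, hrp, h4]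
  ring

/-- If `∑_{n ≤ X} |f(n)|² ≪ X (log X)^{c-1}`, then for `2 ≤ Y ≤ X`,
`∑_{n ≤ X} |f(n)| log(1 + Y/n) ≪ X (log X)^{(c-1)/2} (Y/X + log X · min(1, Y/X))^{1/2}`;
in particular for `Y = X (log X)^{-A}` the sum is
`≪ X (log X)^{(c+1)/2 - A/2} + X (log X)^{(c-1)/2 - A}`. -/
theorem weighted_log_sum_bound (f : ℕ → ℂ) (c : ℝ) (hc : 1 ≤ c) (C₀ : ℝ)
    (hmoment : ∀ X : ℝ, 2 ≤ X →
      ∑ n ∈ Finset.Icc 1 ⌊X⌋₊, ‖f n‖ ^ 2 ≤ C₀ * X * (Real.log X) ^ (c - 1)) :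
    (∃ C : ℝ, ∀ X Y : ℝ, 2 ≤ X → 2 ≤ Y → Y ≤ X →
        ∑ n ∈ Finset.Icc 1 ⌊X⌋₊, ‖f n‖ * Real.log (1 + Y / n)
          ≤ C * X * (Real.log X) ^ ((c - 1) / 2)
              * (Y / X + Real.log X * min 1 (Y / X)) ^ ((1 : ℝ) / 2))
      ∧ (∀ A : ℝ, 0 < A → ∃ C : ℝ, ∀ X : ℝ, 2 ≤ X →
          2 ≤ X * (Real.log X) ^ (-A) →
          ∑ n ∈ Finset.Icc 1 ⌊X⌋₊,
              ‖f n‖ * Real.log (1 + X * (Real.log X) ^ (-A) / n)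
            ≤ C * (X * (Real.log X) ^ ((c + 1) / 2 - A / 2)
                + X * (Real.log X) ^ ((c - 1) / 2 - A))) := by
  constructor
  · refine ⟨2 * Real.sqrt C₀, fun X Y hX hY hYX => ?_⟩
    have hX0 : (0 : ℝ) < X := by linarith
    have hY0 : (0 : ℝ) < Y := by linarith
    have hlogX : 0 < Real.log X := Real.log_pos (by linarith)
    have hcore := core_bound f c C₀ hmoment X Y hX hY0
    refine hcore.trans_eq ?_
    have hmin : min 1 (Y / X) = Y / X :=
      min_eq_right ((div_le_one hX0).mpr hYX)
    rw [hmin]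
    have hfac : Y / X + Real.log X * (Y / X) = (Y / X) * (1 + Real.log X) := by ring
    have hsd : Real.sqrt (Y / X) = Real.sqrt Y / Real.sqrt X := Real.sqrt_div hY0.le X
    rw [hfac, ← Real.sqrt_eq_rpow, Real.sqrt_mul (by positivity : (0:ℝ) ≤ Y / X), hsd]
    have hXne : Real.sqrt X ≠ 0 := by positivity
    have hsX : Real.sqrt X * Real.sqrt X = X := Real.mul_self_sqrt hX0.le
    field_simp
    linear_combination Real.sqrt C₀ * hsX
  · intro A hA
    refine ⟨2 * Real.sqrt 5 * Real.sqrt C₀, fun X hX hY2 => ?_⟩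
    have hX0 : (0 : ℝ) < X := by linarith
    have hlogX : 0 < Real.log X := Real.log_pos (by linarith)
    set Y := X * (Real.log X) ^ (-A) with hYdef
    have hY0 : 0 < Y := by positivity
    have hcore := core_bound f c C₀ hmoment X Y hX hY0
    have hl2 : Real.log 2 ≤ Real.log X := Real.log_le_log (by norm_num) hX
    have hlog2 := Real.log_two_gt_d9
    have h5 : 1 + Real.log X ≤ 5 * (Real.log X) ^ 2 := by nlinarith
    have s5 : Real.sqrt (1 + Real.log X) ≤ Real.sqrt 5 * Real.log X := by
      calc Real.sqrt (1 + Real.log X) ≤ Real.sqrt (5 * (Real.log X) ^ 2) :=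
            Real.sqrt_le_sqrt h5
        _ = Real.sqrt 5 * Real.log X := by
            rw [Real.sqrt_mul (by norm_num) _, Real.sqrt_sq hlogX.le]
    have hsqpow : Real.sqrt ((Real.log X) ^ (-A)) = (Real.log X) ^ (-A / 2) := by
      rw [Real.sqrt_eq_rpow, ← Real.rpow_mul hlogX.le, mul_one_div]
    have hsqY : Real.sqrt Y = Real.sqrt X * (Real.log X) ^ (-A / 2) := by
      rw [hYdef, Real.sqrt_mul hX0.le, hsqpow]
    have hcomb : (Real.log X) ^ ((c - 1) / 2) * (Real.log X) ^ (-A / 2) * Real.log X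
        = (Real.log X) ^ ((c + 1) / 2 - A / 2) := by
      rw [show (c + 1) / 2 - A / 2 = (c - 1) / 2 + (-A / 2) + 1 by ring,
        Real.rpow_add hlogX, Real.rpow_add hlogX, Real.rpow_one]
    have hsX : Real.sqrt X * Real.sqrt X = X := Real.mul_self_sqrt hX0.le
    refine hcore.trans ?_
    have hC₀' : (0 : ℝ) ≤ Real.sqrt C₀ := Real.sqrt_nonneg _
    calc 2 * Real.sqrt C₀ * Real.sqrt X * Real.sqrt Y * (Real.log X) ^ ((c - 1) / 2)
          * Real.sqrt (1 + Real.log X)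
        = (2 * Real.sqrt C₀ * X * (Real.log X) ^ (-A / 2) * (Real.log X) ^ ((c - 1) / 2))
            * Real.sqrt (1 + Real.log X) := by
          rw [hsqY]
          linear_combination (2 * Real.sqrt C₀ * Real.log X ^ (-A / 2)
            * Real.log X ^ ((c - 1) / 2) * Real.sqrt (1 + Real.log X)) * hsX
      _ ≤ (2 * Real.sqrt C₀ * X * (Real.log X) ^ (-A / 2) * (Real.log X) ^ ((c - 1) / 2))
            * (Real.sqrt 5 * Real.log X) := by
          apply mul_le_mul_of_nonneg_left s5
          positivity
      _ = (2 * Real.sqrt 5 * Real.sqrt C₀)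
            * (X * ((Real.log X) ^ ((c - 1) / 2) * (Real.log X) ^ (-A / 2) * Real.log X)) := by
          ring
      _ = (2 * Real.sqrt 5 * Real.sqrt C₀) * (X * (Real.log X) ^ ((c + 1) / 2 - A / 2)) := by
          rw [hcomb]
      _ ≤ (2 * Real.sqrt 5 * Real.sqrt C₀)
            * (X * (Real.log X) ^ ((c + 1) / 2 - A / 2)
              + X * (Real.log X) ^ ((c - 1) / 2 - A)) := by
          have h0 : (0 : ℝ) ≤ X * (Real.log X) ^ ((c - 1) / 2 - A) := by positivity
          have hc0 : (0 : ℝ) ≤ 2 * Real.sqrt 5 * Real.sqrt C₀ := by positivity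
          nlinarith
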